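/- arXiv:1603.02916 — 2 statements merged into one kernel-verified Lean document; each statement's English description precedes it below -/
import Mathlib

section
/- For every x ∈ [-1,1] and every ε > 0, there exists a sequence s on the neuron set {1,2} with supp(s) = {1,2} such that |β_{12}(s) - x| < ε. In other words, the set of obtainable skew biases of sequences on two neurons is dense in [-1,1]. -/
open Finset

namespace NeuralSeq

/-- The bias count `c_{ij}(s)`: number of index pairs `k < k'` with `s_k = i` and `s_{k'} = j`. -/
def biasCount {n : ℕ} : List (Fin n) → Fin n → Fin n → ℕ
  | [], _, _ => 0
  | a :: t, i, j => (if a = i then t.count j else 0) + biasCount t i j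

/-- The skew bias `β_{ij}(s)`. -/
noncomputable def skewBias {n : ℕ} (s : List (Fin n)) (i j : Fin n) : ℝ :=
  if 0 < s.count i ∧ 0 < s.count j then
    ((biasCount s i j : ℝ) - (biasCount s j i : ℝ)) / ((s.count i : ℝ) * (s.count j : ℝ))
  else 0

/-- The skew-bias matrix `B_skew(s)`. -/
noncomputable def Bskew {n : ℕ} (s : List (Fin n)) : Matrix (Fin n) (Fin n) ℝ :=
  Matrix.of fun i j => skewBias s i j

/-- The probability bias `b_{ij}(s)` (meaningful when `i, j ∈ supp(s)`). -/
noncomputable def probBias {n : ℕ} (s : List (Fin n)) (i j : Fin n) : ℝ :=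
  (biasCount s i j : ℝ) / ((s.count i : ℝ) * (s.count j : ℝ))

/-- The (unnormalized) center of mass `com_i(s)`, with 1-based indexing. -/
noncomputable def com {n : ℕ} (s : List (Fin n)) (i : Fin n) : ℝ :=
  if 0 < s.count i then
    (∑ k : Fin s.length, if s.get k = i then ((k : ℕ) + 1 : ℝ) else 0) / (s.count i : ℝ)
  else ((s.length : ℝ) + 1) / 2

/-- The normalized center of mass `γ_i(s)`. -/
noncomputable def gamma {n : ℕ} (s : List (Fin n)) (i : Fin n) : ℝ :=
  (2 * com s i - 1) / (s.length : ℝ) - 1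

/-- The firing rate `ρ_i(s)`. -/
noncomputable def rate {n : ℕ} (s : List (Fin n)) (i : Fin n) : ℝ :=
  (s.count i : ℝ) / (s.length : ℝ)

/-- A sequence is pure if for every pair of distinct active neurons, all spikes of one
precede all spikes of the other (equivalently, `c_{ij}(s) = 0` or `c_{ji}(s) = 0`). -/
def IsPure {n : ℕ} (s : List (Fin n)) : Prop :=
  ∀ i j : Fin n, i ≠ j → 0 < s.count i → 0 < s.count j →
    biasCount s i j = 0 ∨ biasCount s j i = 0

/-- The subsequence `s_I` of `s` given by an index set `I`. -/
def subseqOf {n : ℕ} (s : List (Fin n)) (I : Finset (Fin s.length)) : List (Fin n) :=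
  ((List.finRange s.length).filter (fun k => decide (k ∈ I))).map s.get

/-- The shuffling `s^π` of `s` by a permutation `π` of its index set. -/
def shuffle {n : ℕ} (s : List (Fin n)) (π : Equiv.Perm (Fin s.length)) : List (Fin n) :=
  (List.finRange s.length).map (fun k => s.get (π k))

/-- The order-`m` bias count `c_v(s)`: the number of subsequences of `s` equal to `v`. -/
def orderCount {n : ℕ} : List (Fin n) → List (Fin n) → ℕ
  | _, [] => 1
  | [], _ :: _ => 0
  | a :: t, v :: vs => (if a = v then orderCount t vs else 0) + orderCount t (v :: vs)

lemma biasCount_append {n : ℕ} (l1 l2 : List (Fin n)) (i j : Fin n) :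
    biasCount (l1 ++ l2) i j = biasCount l1 i j + l1.count i * l2.count j + biasCount l2 i j := by
  induction l1 with
  | nil => simp [biasCount]
  | cons a t ih =>
      by_cases h : a = i <;>
        simp [biasCount, h, ih, List.count_append, List.count_cons] <;> ring

lemma biasCount_replicate {n : ℕ} (m : ℕ) (v i j : Fin n) (h : i ≠ j) :
    biasCount (List.replicate m v) i j = 0 := by
  induction m with
  | zero => rfl
  | succ k ih =>
      simp only [List.replicate_succ, biasCount, ih, add_zero]
      by_cases hv : v = i
      · subst hv
        rw [List.count_replicate]
        simp [h]
      · simp [hv]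

end NeuralSeq

open NeuralSeq in
/-- skew biases of two-neuron sequences are dense in `[-1, 1]`. -/
theorem two_neuron_biases_dense (x : ℝ) (hx : x ∈ Set.Icc (-1 : ℝ) 1) (ε : ℝ) (hε : 0 < ε) :
    ∃ s : List (Fin 2), 0 < s.count 0 ∧ 0 < s.count 1 ∧
      |skewBias s 0 1 - x| < ε := by
  obtain ⟨N, hN⟩ := exists_nat_gt (2 / ε)
  have hNpos : (0 : ℝ) < N := lt_trans (div_pos two_pos hε) hN
  obtain ⟨hx1, hx2⟩ := hx
  set a : ℕ := ⌊(N : ℝ) * (x + 1) / 2⌋₊ with ha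
  have hnn : 0 ≤ (N : ℝ) * (x + 1) / 2 := by nlinarith
  have hfl : (a : ℝ) ≤ (N : ℝ) * (x + 1) / 2 := Nat.floor_le hnn
  have hfl2 : (N : ℝ) * (x + 1) / 2 < (a : ℝ) + 1 := Nat.lt_floor_add_one _
  have haN : a ≤ N := by
    have h1 : (N : ℝ) * (x + 1) / 2 ≤ (N : ℝ) := by nlinarith
    have := Nat.floor_le_floor h1
    simpa [ha] using this
  set c : ℕ := N - a with hc
  have hac : a + c = N := by omega
  have hcast : (c : ℝ) = (N : ℝ) - (a : ℝ) := by
    rw [hc, Nat.cast_sub haN]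
  refine ⟨List.replicate a 0 ++ [1] ++ List.replicate c 0, ?_, ?_, ?_⟩
  · have : (List.replicate a (0 : Fin 2) ++ [1] ++ List.replicate c 0).count 0 = a + c := by
      simp [List.count_append, List.count_replicate, List.count_singleton]
    rw [this, hac]
    exact lt_of_lt_of_le (by exact_mod_cast hNpos) le_rfl
  · simp [List.count_append, List.count_replicate, List.count_singleton]
  · have hcount0 : (List.replicate a (0 : Fin 2) ++ [1] ++ List.replicate c 0).count 0 = N := by
      simp [List.count_append, List.count_replicate, List.count_singleton]
      omega
    have hcount1 : (List.replicate a (0 : Fin 2) ++ [1] ++ List.replicate c 0).count 1 = 1 := by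
      simp [List.count_append, List.count_replicate, List.count_singleton]
    have hb01 : biasCount (List.replicate a (0 : Fin 2) ++ [1] ++ List.replicate c 0) 0 1 = a := by
      rw [biasCount_append, biasCount_append]
      simp [biasCount, List.count_replicate, List.count_singleton,
        biasCount_replicate _ _ _ _ (by decide : (0 : Fin 2) ≠ 1)]
    have hb10 : biasCount (List.replicate a (0 : Fin 2) ++ [1] ++ List.replicate c 0) 1 0 = c := by
      rw [biasCount_append, biasCount_append]
      simp [biasCount, List.count_replicate, List.count_singleton,
        biasCount_replicate _ _ _ _ (by decide : (1 : Fin 2) ≠ 0)]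
    have hNne : (N : ℝ) ≠ 0 := ne_of_gt hNpos
    have hNnat : 0 < N := by exact_mod_cast hNpos
    rw [skewBias, if_pos ⟨by rw [hcount0]; exact hNnat, by rw [hcount1]; exact one_pos⟩,
      hb01, hb10, hcount0, hcount1, hcast]
    have heq : ((a : ℝ) - ((N : ℝ) - (a : ℝ))) / ((N : ℝ) * (1 : ℕ)) - x
        = (2 * (a : ℝ) - (x + 1) * (N : ℝ)) / (N : ℝ) := by
      field_simp
      ring
    rw [heq, abs_lt]
    have hεN : 2 < ε * (N : ℝ) := by
      rw [div_lt_iff₀ hε] at hN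
      linarith
    constructor
    · rw [lt_div_iff₀ hNpos]
      nlinarith
    · rw [div_lt_iff₀ hNpos]
      nlinarith
end

section
/- If s is a pure sequence on the neuron set N = {1,...,n} with supp(s) = N, then there exists a permutation π of N such that for all neurons i, j: β_{ij}(s) = 1 if π(i) < π(j), β_{ij}(s) = -1 if π(i) > π(j), and β_{ii}(s) = 0. Equivalently, B_skew(s) = P^{-1} A P where A = B_skew((1,2,...,n)) and P is the permutation matrix of π. -/
open Finset

namespace NeuralSeq

section Aux

variable {n : ℕ}

lemma biasCount_eq_zero_right (s : List (Fin n)) (i j : Fin n) (h : s.count j = 0) :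
    biasCount s i j = 0 := by
  induction s with
  | nil => rfl
  | cons a t ih =>
    rw [List.count_cons] at h
    have ht : t.count j = 0 := by omega
    simp [biasCount, ht, ih ht]

lemma biasCount_add (s : List (Fin n)) {i j : Fin n} (h : i ≠ j) :
    biasCount s i j + biasCount s j i = s.count i * s.count j := by
  induction s with
  | nil => simp [biasCount]
  | cons a t ih =>
    simp only [biasCount, List.count_cons, beq_iff_eq]
    by_cases hai : a = i
    · subst hai
      simp only [if_pos rfl, if_neg h, if_neg (Ne.symm h), if_true]
      nlinarith [ih]
    · by_cases haj : a = j
      · subst haj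
        simp only [if_pos rfl, if_neg hai, if_true]
        nlinarith [ih]
      · simp only [if_neg hai, if_neg haj]
        nlinarith [ih]

lemma biasCount_trans (s : List (Fin n)) {i j k : Fin n} (hjk : j ≠ k)
    (h1 : biasCount s j i = 0) (h2 : biasCount s k j = 0)
    (cj : 0 < s.count j) (ck : 0 < s.count k) :
    biasCount s k i = 0 := by
  induction s with
  | nil => rfl
  | cons a t ih =>
    simp only [biasCount, List.count_cons, beq_iff_eq] at h1 h2 cj ck ⊢
    by_cases hak : a = k
    · rw [if_pos hak] at h2
      have htj : t.count j = 0 := by omega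
      have haj : a = j := by
        by_contra hja
        rw [htj, if_neg hja] at cj
        omega
      exact absurd (haj.symm.trans hak) hjk
    · rw [if_neg hak] at h2 ⊢
      have htk : 0 < t.count k := by
        rw [if_neg hak] at ck
        omega
      by_cases hti : t.count i = 0
      · simpa using biasCount_eq_zero_right t k i hti
      · have htj : 0 < t.count j := by
          by_contra htj0
          have htj0 : t.count j = 0 := by omega
          have haj : a = j := by
            by_contra hja
            rw [htj0, if_neg hja] at cj
            omega
          rw [if_pos haj] at h1
          omega
        have h1' : biasCount t j i = 0 := by omega
        have h2' : biasCount t k j = 0 := by omega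
        simpa using ih h1' h2' htj htk

lemma skewBias_self (s : List (Fin n)) (i : Fin n) : skewBias s i i = 0 := by
  simp [skewBias]

lemma skewBias_eq_one (s : List (Fin n)) {i j : Fin n} (hne : i ≠ j)
    (hji : biasCount s j i = 0) (ci : 0 < s.count i) (cj : 0 < s.count j) :
    skewBias s i j = 1 := by
  have hadd := biasCount_add s hne
  rw [hji, Nat.add_zero] at hadd
  rw [skewBias, if_pos ⟨ci, cj⟩, hji, hadd]
  have hci : (s.count i : ℝ) ≠ 0 := Nat.cast_ne_zero.mpr ci.ne'
  have hcj : (s.count j : ℝ) ≠ 0 := Nat.cast_ne_zero.mpr cj.ne'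
  push_cast
  field_simp
  ring

lemma skewBias_eq_neg_one (s : List (Fin n)) {i j : Fin n} (hne : i ≠ j)
    (hij : biasCount s i j = 0) (ci : 0 < s.count i) (cj : 0 < s.count j) :
    skewBias s i j = -1 := by
  have hadd := biasCount_add s hne
  rw [hij, Nat.zero_add] at hadd
  rw [skewBias, if_pos ⟨ci, cj⟩, hij, hadd]
  have hci : (s.count i : ℝ) ≠ 0 := Nat.cast_ne_zero.mpr ci.ne'
  have hcj : (s.count j : ℝ) ≠ 0 := Nat.cast_ne_zero.mpr cj.ne'
  push_cast
  field_simp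
  ring

lemma biasCount_sorted (t : List (Fin n)) (ht : t.Pairwise (· < ·)) {a b : Fin n}
    (hab : a < b) : biasCount t b a = 0 := by
  induction t with
  | nil => rfl
  | cons x r ih =>
    rw [List.pairwise_cons] at ht
    simp only [biasCount]
    have hra : (x = b) → r.count a = 0 := by
      rintro rfl
      exact List.count_eq_zero.mpr fun hmem => absurd (ht.1 a hmem) (not_lt.mpr hab.le)
    by_cases hx : x = b
    · rw [if_pos hx, hra hx, ih ht.2]
    · rw [if_neg hx, ih ht.2]

lemma count_finRange' (i : Fin n) : (List.finRange n).count i = 1 :=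
  List.count_eq_one_of_mem (List.nodup_finRange n) (List.mem_finRange i)

lemma skewBias_finRange_of_lt {a b : Fin n} (hab : a < b) :
    skewBias (List.finRange n) a b = 1 :=
  skewBias_eq_one _ hab.ne (biasCount_sorted _ (List.pairwise_lt_finRange n) hab)
    (by rw [count_finRange']; norm_num) (by rw [count_finRange']; norm_num)

lemma skewBias_finRange_of_gt {a b : Fin n} (hab : b < a) :
    skewBias (List.finRange n) a b = -1 :=
  skewBias_eq_neg_one _ hab.ne' (biasCount_sorted _ (List.pairwise_lt_finRange n) hab)
    (by rw [count_finRange']; norm_num) (by rw [count_finRange']; norm_num)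

end Aux

end NeuralSeq

open NeuralSeq Matrix in
/-- the skew-bias matrix of a pure full-support sequence is, up to conjugation
by a permutation matrix, the skew-bias matrix of the identity sequence `(1, 2, ..., n)`
(i.e. `β_ij = 1` if `π i < π j`, `β_ij = -1` if `π j < π i`, and `β_ii = 0`). -/
theorem pure_Bskew_is_permuted_identity_bias {n : ℕ} (s : List (Fin n))
    (hsupp : ∀ i : Fin n, 0 < s.count i) (hpure : IsPure s) :
    ∃ π : Equiv.Perm (Fin n),
      (∀ i j : Fin n,
        (π i < π j → skewBias s i j = 1) ∧
        (π j < π i → skewBias s i j = -1) ∧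
        (i = j → skewBias s i j = 0)) ∧
      Bskew s =
        (Equiv.Perm.permMatrix ℝ π) * Bskew (List.finRange n) * (Equiv.Perm.permMatrix ℝ π⁻¹) := by
  classical
  have asymm : ∀ i j : Fin n, i ≠ j → biasCount s j i = 0 → biasCount s i j ≠ 0 := by
    intro i j h h0 h1
    have hadd := biasCount_add s h
    rw [h0, h1] at hadd
    exact absurd hadd.symm (Nat.mul_pos (hsupp i) (hsupp j)).ne'
  have tri : ∀ i j : Fin n, i ≠ j → biasCount s j i = 0 ∨ biasCount s i j = 0 := by
    intro i j h
    rcases hpure i j h (hsupp i) (hsupp j) with h0 | h0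
    · exact Or.inr h0
    · exact Or.inl h0
  have ltrans : ∀ i j k : Fin n, (i ≠ j ∧ biasCount s j i = 0) →
      (j ≠ k ∧ biasCount s k j = 0) → (i ≠ k ∧ biasCount s k i = 0) := by
    rintro i j k ⟨hij, h1⟩ ⟨hjk, h2⟩
    have hik : i ≠ k := by
      rintro rfl
      exact asymm i j hij h1 h2
    exact ⟨hik, biasCount_trans s hjk h1 h2 (hsupp j) (hsupp k)⟩
  set rank : Fin n → ℕ :=
    fun i => (univ.filter fun j => j ≠ i ∧ biasCount s i j = 0).card with hrank
  have hmono : ∀ i j : Fin n, i ≠ j → biasCount s j i = 0 → rank i < rank j := by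
    intro i j hij h0
    apply Finset.card_lt_card
    rw [Finset.ssubset_iff_of_subset]
    · exact ⟨i, by simp [hij, h0], by simp⟩
    · intro k hk
      simp only [Finset.mem_filter, Finset.mem_univ, true_and] at hk ⊢
      exact ltrans k i j hk ⟨hij, h0⟩
  have hrankn : ∀ i : Fin n, rank i < n := by
    intro i
    have : (univ.filter fun j => j ≠ i ∧ biasCount s i j = 0) ⊂ univ := by
      rw [Finset.ssubset_iff_of_subset (Finset.subset_univ _)]
      exact ⟨i, Finset.mem_univ i, by simp⟩
    simpa using Finset.card_lt_card this
  set f : Fin n → Fin n := fun i => ⟨rank i, hrankn i⟩ with hf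
  have hinj : Function.Injective f := by
    intro a b hab
    by_contra hne
    have hval : rank a = rank b := congrArg Fin.val hab
    rcases tri a b hne with h0 | h0
    · exact absurd hval (hmono a b hne h0).ne
    · exact absurd hval.symm (hmono b a (Ne.symm hne) h0).ne
  set π : Equiv.Perm (Fin n) := Equiv.ofBijective f (Finite.injective_iff_bijective.mp hinj)
    with hπdef
  have hπ : ∀ i, π i = f i := fun _ => rfl
  have hlt : ∀ i j : Fin n, π i < π j ↔ (i ≠ j ∧ biasCount s j i = 0) := by
    intro i j
    constructor
    · intro h
      rw [hπ, hπ, Fin.lt_def] at h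
      have hne : i ≠ j := by
        rintro rfl
        exact lt_irrefl _ h
      rcases tri i j hne with h0 | h0
      · exact ⟨hne, h0⟩
      · exact absurd h (not_lt.mpr (hmono j i (Ne.symm hne) h0).le)
    · rintro ⟨hne, h0⟩
      rw [hπ, hπ, Fin.lt_def]
      exact hmono i j hne h0
  refine ⟨π, fun i j => ⟨?_, ?_, ?_⟩, ?_⟩
  · intro h
    obtain ⟨hne, h0⟩ := (hlt i j).1 h
    exact skewBias_eq_one s hne h0 (hsupp i) (hsupp j)
  · intro h
    obtain ⟨hne, h0⟩ := (hlt j i).1 h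
    exact skewBias_eq_neg_one s (Ne.symm hne) h0 (hsupp i) (hsupp j)
  · rintro rfl
    exact skewBias_self s i
  · have hmul : (Equiv.Perm.permMatrix ℝ π) * Bskew (List.finRange n)
        * (Equiv.Perm.permMatrix ℝ π⁻¹)
        = (Bskew (List.finRange n)).submatrix π π := by
      rw [Equiv.Perm.permMatrix, Equiv.Perm.permMatrix, PEquiv.toMatrix_toPEquiv_mul,
        PEquiv.mul_toMatrix_toPEquiv]
      ext a b
      simp [Matrix.submatrix_apply, Equiv.Perm.inv_def]
    rw [hmul]
    ext i j
    show skewBias s i j = skewBias (List.finRange n) (π i) (π j)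
    rcases lt_trichotomy (π i) (π j) with h | h | h
    · obtain ⟨hne, h0⟩ := (hlt i j).1 h
      rw [skewBias_eq_one s hne h0 (hsupp i) (hsupp j), skewBias_finRange_of_lt h]
    · have hij : i = j := π.injective h
      subst hij
      rw [skewBias_self, skewBias_self]
    · obtain ⟨hne, h0⟩ := (hlt j i).1 h
      rw [skewBias_eq_neg_one s (Ne.symm hne) h0 (hsupp i) (hsupp j),
        skewBias_finRange_of_gt h]
end
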